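/- Let L : 𝒜 ⇄ ℬ : R be an adjunction (L left adjoint to R) between finite categories. Assume the adjacency matrix [𝒜] has a coweighting and [ℬ] has a weighting. Then [ℬ] has a coweighting (namely 1ᵀ·[𝒜]⁺·[L]ᵀ), [𝒜] has a weighting (namely [R]·[ℬ]⁺·1), and χ(𝒜) = χ(ℬ), i.e., 1ᵀ·[𝒜]⁺·1 = 1ᵀ·[ℬ]⁺·1. -/
import Mathlib


open Matrix CategoryTheory

/-- `Y` is a Moore–Penrose inverse of `M`. -/
def IsMoorePenrose {m n : Type*} [Fintype m] [Fintype n]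
    (M : Matrix m n ℚ) (Y : Matrix n m ℚ) : Prop :=
  M * Y * M = M ∧ Y * M * Y = Y ∧ (Y * M)ᵀ = Y * M ∧ (M * Y)ᵀ = M * Y

/-- The adjacency matrix of a finite category. -/
noncomputable def adjMat (A : Type*) [SmallCategory A] [Fintype A] : Matrix A A ℚ :=
  fun a a' => (Nat.card (a ⟶ a') : ℚ)

/-- The matrix of a functor `L : 𝒜 → ℬ`: its `(b,a)` entry is `1` if `L(a) = b`, else `0`. -/
def funcMat {A B : Type*} [SmallCategory A] [SmallCategory B] [DecidableEq B]
    (L : A ⥤ B) : Matrix B A ℚ :=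
  fun b a => if L.obj a = b then 1 else 0

/-- Let `L : 𝒜 ⇄ ℬ : R` be an adjunction between finite categories. If `[𝒜]`
has a coweighting and `[ℬ]` has a weighting, then `1ᵀ·[𝒜]⁺·[L]ᵀ` is a coweighting for `[ℬ]`,
`[R]·[ℬ]⁺·1` is a weighting for `[𝒜]`, and `χ(𝒜) = χ(ℬ)`, i.e.
`1ᵀ·[𝒜]⁺·1 = 1ᵀ·[ℬ]⁺·1`. -/
theorem chi_eq_of_adjunction (A B : Type) [SmallCategory A] [SmallCategory B]
    [Fintype A] [Fintype B] [DecidableEq A] [DecidableEq B]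
    [∀ a a' : A, Finite (a ⟶ a')] [∀ b b' : B, Finite (b ⟶ b')]
    (L : A ⥤ B) (R : B ⥤ A) (adj : L ⊣ R)
    (YA : Matrix A A ℚ) (hYA : IsMoorePenrose (adjMat A) YA)
    (YB : Matrix B B ℚ) (hYB : IsMoorePenrose (adjMat B) YB)
    (v : A → ℚ) (hv : v ᵥ* adjMat A = 1)
    (w : B → ℚ) (hw : adjMat B *ᵥ w = 1) :
    (((1 : A → ℚ) ᵥ* YA) ᵥ* (funcMat L)ᵀ) ᵥ* adjMat B = 1 ∧
      adjMat A *ᵥ (funcMat R *ᵥ (YB *ᵥ (1 : B → ℚ))) = 1 ∧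
      (1 : A → ℚ) ⬝ᵥ (YA *ᵥ (1 : A → ℚ)) = (1 : B → ℚ) ⬝ᵥ (YB *ᵥ (1 : B → ℚ)) := by
  obtain ⟨hA, -, -, -⟩ := hYA
  obtain ⟨hB, -, -, -⟩ := hYB
  -- key identity from the adjunction
  have key : (funcMat L)ᵀ * adjMat B = adjMat A * funcMat R := by
    ext a b
    simp only [mul_apply, transpose_apply, funcMat, ite_mul, mul_ite, one_mul, mul_one,
      zero_mul, mul_zero]
    rw [Finset.sum_ite_eq Finset.univ (L.obj a), Finset.sum_ite_eq Finset.univ (R.obj b)]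
    simp only [Finset.mem_univ, if_true, adjMat]
    exact Nat.cast_inj.mpr (Nat.card_congr (adj.homEquiv a b))
  have hR1 : (1 : A → ℚ) ᵥ* funcMat R = 1 := by
    ext b
    simp only [vecMul, dotProduct, funcMat, Pi.one_apply, one_mul]
    simp [Finset.sum_ite_eq]
  have hL1 : (funcMat L)ᵀ *ᵥ (1 : B → ℚ) = 1 := by
    ext a
    simp only [mulVec, dotProduct, transpose_apply, funcMat, Pi.one_apply, mul_one]
    simp [Finset.sum_ite_eq]
  have hA1 : (1 : A → ℚ) ᵥ* (YA * adjMat A) = 1 := by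
    calc (1 : A → ℚ) ᵥ* (YA * adjMat A) = (v ᵥ* adjMat A) ᵥ* (YA * adjMat A) := by rw [hv]
    _ = v ᵥ* (adjMat A * (YA * adjMat A)) := by rw [vecMul_vecMul]
    _ = v ᵥ* adjMat A := by rw [← Matrix.mul_assoc, hA]
    _ = 1 := hv
  have hB1 : (adjMat B * YB) *ᵥ (1 : B → ℚ) = 1 := by
    calc (adjMat B * YB) *ᵥ (1 : B → ℚ) = (adjMat B * YB) *ᵥ (adjMat B *ᵥ w) := by rw [hw]
    _ = ((adjMat B * YB) * adjMat B) *ᵥ w := by rw [mulVec_mulVec]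
    _ = adjMat B *ᵥ w := by rw [hB]
    _ = 1 := hw
  have part2 : adjMat A *ᵥ (funcMat R *ᵥ (YB *ᵥ (1 : B → ℚ))) = 1 := by
    calc adjMat A *ᵥ (funcMat R *ᵥ (YB *ᵥ (1 : B → ℚ)))
        = ((adjMat A * funcMat R) * YB) *ᵥ (1 : B → ℚ) := by rw [mulVec_mulVec, mulVec_mulVec]
    _ = (((funcMat L)ᵀ * adjMat B) * YB) *ᵥ (1 : B → ℚ) := by rw [key]
    _ = (funcMat L)ᵀ *ᵥ ((adjMat B * YB) *ᵥ (1 : B → ℚ)) := by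
        rw [mulVec_mulVec, ← Matrix.mul_assoc]
    _ = 1 := by rw [hB1, hL1]
  refine ⟨?_, part2, ?_⟩
  · calc (((1 : A → ℚ) ᵥ* YA) ᵥ* (funcMat L)ᵀ) ᵥ* adjMat B
        = (1 : A → ℚ) ᵥ* (YA * ((funcMat L)ᵀ * adjMat B)) := by
          rw [vecMul_vecMul, vecMul_vecMul]
    _ = (1 : A → ℚ) ᵥ* ((YA * adjMat A) * funcMat R) := by rw [key, Matrix.mul_assoc]
    _ = ((1 : A → ℚ) ᵥ* (YA * adjMat A)) ᵥ* funcMat R := by rw [vecMul_vecMul]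
    _ = 1 := by rw [hA1, hR1]
  · calc (1 : A → ℚ) ⬝ᵥ (YA *ᵥ (1 : A → ℚ))
        = (1 : A → ℚ) ⬝ᵥ (YA *ᵥ (adjMat A *ᵥ (funcMat R *ᵥ (YB *ᵥ (1 : B → ℚ))))) := by
          rw [part2]
    _ = ((1 : A → ℚ) ᵥ* (YA * adjMat A)) ⬝ᵥ (funcMat R *ᵥ (YB *ᵥ (1 : B → ℚ))) := by
          rw [dotProduct_mulVec, dotProduct_mulVec, vecMul_vecMul]
    _ = ((1 : A → ℚ) ᵥ* funcMat R) ⬝ᵥ (YB *ᵥ (1 : B → ℚ)) := by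
          rw [hA1, dotProduct_mulVec]
    _ = (1 : B → ℚ) ⬝ᵥ (YB *ᵥ (1 : B → ℚ)) := by rw [hR1]
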